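/- Observational entropy with a single projective coarse-graining is at least the von Neumann entropy: S_vN(ρ) = -tr(ρ ln ρ) ≤ -∑_i p_i ln(p_i/V_i), where p_i = tr(P_i ρ) and V_i = tr(P_i). -/

import Mathlib

open scoped Matrix ComplexOrder

lemma log_sum_ineq {α : Type*} [Fintype α] (a b : α → ℝ)
    (ha : ∀ x, 0 ≤ a x) (hb : ∀ x, 0 ≤ b x) (hab : ∀ x, b x = 0 → a x = 0) :
    (∑ x, a x) * Real.log ((∑ x, a x) / (∑ x, b x))
      ≤ ∑ x, a x * Real.log (a x / b x) := by
  set A := ∑ x, a x with hA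
  set B := ∑ x, b x with hB
  rcases eq_or_lt_of_le (Finset.sum_nonneg fun x _ => ha x) with h0 | hApos
  · -- A = 0 : all a x = 0
    have hax : ∀ x ∈ Finset.univ, a x = 0 := by
      intro x hx
      exact (Finset.sum_eq_zero_iff_of_nonneg (fun x _ => ha x)).mp h0.symm x hx
    have hA0 : A = 0 := h0.symm
    rw [hA0]
    simp only [zero_mul]
    refine le_of_eq (Finset.sum_eq_zero fun x hx => ?_).symm
    rw [hax x hx, zero_mul]
  · have hBpos : 0 < B := by
      rcases eq_or_lt_of_le (Finset.sum_nonneg fun x (_ : x ∈ Finset.univ) => hb x) with h0' | h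
      · exfalso
        have hbx := (Finset.sum_eq_zero_iff_of_nonneg (fun x _ => hb x)).mp h0'.symm
        have : A = 0 := Finset.sum_eq_zero fun x hx => hab x (hbx x hx)
        linarith
      · exact h
    have key : ∀ x, a x - (A / B) * b x ≤ a x * Real.log (a x / b x) - a x * Real.log (A / B) := by
      intro x
      rcases eq_or_lt_of_le (ha x) with h0x | hax
      · rw [← h0x]
        simp only [zero_mul, sub_zero, zero_sub, neg_nonpos, zero_mul]
        exact mul_nonneg (div_nonneg hApos.le hBpos.le) (hb x)
      · have hbx : 0 < b x := by
          rcases eq_or_lt_of_le (hb x) with h0b | h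
          · exact absurd (hab x h0b.symm) (ne_of_gt hax)
          · exact h
        have ht : 0 < (b x * A) / (a x * B) := by positivity
        have hlog := Real.log_le_sub_one_of_pos ht
        have hrw : Real.log ((b x * A) / (a x * B)) =
            Real.log (A / B) - Real.log (a x / b x) := by
          rw [Real.log_div (by positivity) (by positivity),
            Real.log_mul (ne_of_gt hbx) (ne_of_gt hApos),
            Real.log_mul (ne_of_gt hax) (ne_of_gt hBpos),
            Real.log_div (ne_of_gt hApos) (ne_of_gt hBpos),
            Real.log_div (ne_of_gt hax) (ne_of_gt hbx)]
          ring
        rw [hrw] at hlog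
        have := mul_le_mul_of_nonneg_left hlog (le_of_lt hax)
        have hval : a x * ((b x * A) / (a x * B)) = (A / B) * b x := by
          field_simp
        nlinarith [this, hval]
    have hsum := Finset.sum_le_sum fun x (_ : x ∈ Finset.univ) => key x
    simp only [Finset.sum_sub_distrib, ← Finset.sum_mul, ← Finset.mul_sum] at hsum
    rw [← hA, ← hB] at hsum
    have : A - A / B * B = 0 := by field_simp; ring
    nlinarith [hsum]

/-- Observational entropy with a single projective coarse-graining is at least the
von Neumann entropy `S_vN(ρ) = -∑ eigenvalues ρ_x ln ρ_x`. -/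
theorem vN_entropy_le_obs_entropy
    {n : Type*} [Fintype n] [DecidableEq n]
    {ι : Type*} [Fintype ι]
    (ρ : Matrix n n ℂ) (hρ : ρ.PosSemidef) (hρ1 : ρ.trace = 1)
    (P : ι → Matrix n n ℂ)
    (hherm : ∀ i, (P i).IsHermitian)
    (hproj : ∀ i, P i * P i = P i)
    (horth : ∀ i j, i ≠ j → P i * P j = 0)
    (hcomp : ∑ i, P i = 1) :
    -∑ x, hρ.1.eigenvalues x * Real.log (hρ.1.eigenvalues x)
      ≤ -∑ i, (P i * ρ).trace.re * Real.log ((P i * ρ).trace.re / (P i).trace.re) := by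
  classical
  set U : Matrix n n ℂ := (Matrix.IsHermitian.eigenvectorUnitary hρ.1 : Matrix n n ℂ) with hU
  have hUU : U * star U = 1 :=
    (Matrix.mem_unitaryGroup_iff).mp (Matrix.IsHermitian.eigenvectorUnitary hρ.1).2
  have hUU' : star U * U = 1 :=
    (Matrix.mem_unitaryGroup_iff').mp (Matrix.IsHermitian.eigenvectorUnitary hρ.1).2
  set lam : n → ℝ := hρ.1.eigenvalues with hlam
  have hlamnn : ∀ x, 0 ≤ lam x := fun x => hρ.eigenvalues_nonneg x
  set Q : ι → Matrix n n ℂ := fun i => star U * P i * U with hQ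
  have hQpsd : ∀ i, (Q i).PosSemidef := by
    intro i
    have hPpsd : (P i).PosSemidef := by
      have h1 : P i = (P i)ᴴ * P i := by
        conv_lhs => rw [← hproj i]
        rw [(hherm i).eq]
      rw [h1]
      exact Matrix.posSemidef_conjTranspose_mul_self (P i)
    simpa [hQ, Matrix.star_eq_conjTranspose] using hPpsd.conjTranspose_mul_mul_same U
  set q : ι → n → ℝ := fun i x => (Q i x x).re with hq
  have hqnn : ∀ i x, 0 ≤ q i x := by
    intro i x
    have h := (hQpsd i).dotProduct_mulVec_nonneg (Pi.single x 1)
    have hval : dotProduct (star (Pi.single x 1)) (Q i *ᵥ Pi.single x 1) = Q i x x := by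
      simp [dotProduct, Matrix.mulVec, Pi.single_apply, Finset.sum_ite_eq,
        Finset.sum_ite_eq', apply_ite]
    rw [hval] at h
    simpa using (Complex.le_def.mp h).1
  -- sum over i of Q i is identity
  have hQsum : ∑ i, Q i = 1 := by
    simp only [hQ]
    calc ∑ i, star U * P i * U = star U * (∑ i, P i) * U := by
          rw [Finset.mul_sum, Finset.sum_mul]
      _ = 1 := by rw [hcomp, mul_one, hUU']
  have hq1 : ∀ x, ∑ i, q i x = 1 := by
    intro x
    have : ∑ i, Q i x x = 1 := by
      rw [← Matrix.sum_apply x x Finset.univ Q, hQsum, Matrix.one_apply_eq]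
    calc ∑ i, q i x = (∑ i, Q i x x).re := by rw [Complex.re_sum]
      _ = 1 := by rw [this]; simp
  -- sum over x of q i x is trace of P i
  have hV : ∀ i, ∑ x, q i x = (P i).trace.re := by
    intro i
    have htr : (Q i).trace = (P i).trace := by
      simp only [hQ]
      rw [Matrix.trace_mul_cycle, hUU, one_mul]
    calc ∑ x, q i x = ((Q i).trace).re := by
          rw [Matrix.trace, Complex.re_sum]; rfl
      _ = (P i).trace.re := by rw [htr]
  -- p i = ∑ x, q i x * lam x
  have hofReal : (RCLike.ofReal ∘ hρ.1.eigenvalues : n → ℂ) = fun x => (lam x : ℂ) := rfl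
  have hp : ∀ i, (P i * ρ).trace.re = ∑ x, q i x * lam x := by
    intro i
    have hspec : ρ = U * Matrix.diagonal (fun x => (lam x : ℂ)) * star U := by
      conv_lhs => rw [hρ.1.spectral_theorem]
      rw [hofReal]
      rw [Unitary.conjStarAlgAut_apply]
    have h1 : (P i * ρ).trace = ∑ x, Q i x x * (lam x : ℂ) := by
      conv_lhs => rw [hspec]
      rw [← mul_assoc, ← mul_assoc, Matrix.trace_mul_comm, ← mul_assoc, ← mul_assoc]
      rw [Matrix.trace]
      simp [Matrix.diag, Matrix.mul_diagonal, hQ, mul_assoc]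
    rw [h1, Complex.re_sum]
    refine Finset.sum_congr rfl fun x _ => ?_
    simp [Complex.mul_re, hq]
  -- main inequality
  rw [neg_le_neg_iff]
  have key : ∀ i, (P i * ρ).trace.re * Real.log ((P i * ρ).trace.re / (P i).trace.re)
      ≤ ∑ x, q i x * lam x * Real.log (lam x) := by
    intro i
    have hls := log_sum_ineq (fun x => q i x * lam x) (q i)
      (fun x => mul_nonneg (hqnn i x) (hlamnn x)) (hqnn i)
      (fun x hx => by show q i x * lam x = 0; rw [hx, zero_mul])
    beta_reduce at hls
    rw [hp i, ← hV i]
    refine le_trans hls (le_of_eq (Finset.sum_congr rfl fun x _ => ?_))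
    rcases eq_or_lt_of_le (hqnn i x) with h0 | hpos
    · rw [← h0]; simp
    · rw [mul_div_cancel_left₀ _ (ne_of_gt hpos)]
  calc ∑ i, (P i * ρ).trace.re * Real.log ((P i * ρ).trace.re / (P i).trace.re)
      ≤ ∑ i, ∑ x, q i x * lam x * Real.log (lam x) := Finset.sum_le_sum fun i _ => key i
    _ = ∑ x, (∑ i, q i x) * (lam x * Real.log (lam x)) := by
        rw [Finset.sum_comm]
        refine Finset.sum_congr rfl fun x _ => ?_
        rw [Finset.sum_mul]
        exact Finset.sum_congr rfl fun j _ => by ring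
    _ = ∑ x, lam x * Real.log (lam x) := by
        refine Finset.sum_congr rfl fun x _ => ?_
        rw [hq1 x, one_mul]
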